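/- arXiv:2105.07229 — 5 statements merged into one kernel-verified Lean document; each statement's English description precedes it below -/
import Mathlib

section
/- Let N1 and N2 be constrained matrix zonotopes of n×p matrices with centers C1, C2, generators (G1^{(i)})_{i=1}^{γ1}, (G2^{(j)})_{j=1}^{γ2}, and constraints given by (A1^{(i)}, B1) and (A2^{(j)}, B2) respectively. Then the Minkowski sum N1 + N2 = {X1 + X2 : X1 ∈ N1, X2 ∈ N2} equals the constrained matrix zonotope with center C1 + C2, generators formed by concatenating (G1^{(i)}) and (G2^{(j)}), constraint matrices given by block-diagonal embeddings [[A1^{(i)}, 0],[0,0]] for i ≤ γ1 and [[0,0],[0, A2^{(j)}]] for the remaining indices, and offset the block-diagonal matrix diag(B1, B2). -/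
open Matrix

/-- A constrained matrix zonotope with center `C`, generator matrices `G i`,
constraint matrices `A i` and offset `B`. -/
def cmz {α β κ δ ι : Type*} [Fintype ι] (C : Matrix α β ℝ) (G : ι → Matrix α β ℝ)
    (A : ι → Matrix κ δ ℝ) (B : Matrix κ δ ℝ) : Set (Matrix α β ℝ) :=
  {X | ∃ b : ι → ℝ, (∀ i, |b i| ≤ 1) ∧ (∑ i, b i • A i) = B ∧ X = C + ∑ i, b i • G i}

private lemma sum_fromBlocks {ι l m n o : Type*} (s : Finset ι)
    (f : ι → Matrix n l ℝ) (g : ι → Matrix n m ℝ) (h : ι → Matrix o l ℝ)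
    (k : ι → Matrix o m ℝ) :
    ∑ i ∈ s, Matrix.fromBlocks (f i) (g i) (h i) (k i)
      = Matrix.fromBlocks (∑ i ∈ s, f i) (∑ i ∈ s, g i) (∑ i ∈ s, h i) (∑ i ∈ s, k i) := by
  classical
  induction s using Finset.induction with
  | empty => simp [Matrix.fromBlocks]; ext (i|i) (j|j) <;> simp
  | insert _ _ hx ih => simp [Finset.sum_insert hx, ih, Matrix.fromBlocks_add]

theorem minkowski_sum_cmz {n p nc1 na1 nc2 na2 γ1 γ2 : ℕ}
    (C1 C2 : Matrix (Fin n) (Fin p) ℝ)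
    (G1 : Fin γ1 → Matrix (Fin n) (Fin p) ℝ) (G2 : Fin γ2 → Matrix (Fin n) (Fin p) ℝ)
    (A1 : Fin γ1 → Matrix (Fin nc1) (Fin na1) ℝ) (B1 : Matrix (Fin nc1) (Fin na1) ℝ)
    (A2 : Fin γ2 → Matrix (Fin nc2) (Fin na2) ℝ) (B2 : Matrix (Fin nc2) (Fin na2) ℝ) :
    {X | ∃ X1 ∈ cmz C1 G1 A1 B1, ∃ X2 ∈ cmz C2 G2 A2 B2, X = X1 + X2}
      = cmz (C1 + C2) (Sum.elim G1 G2)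
          (Sum.elim (fun i => Matrix.fromBlocks (A1 i) 0 0 0)
                    (fun j => Matrix.fromBlocks 0 0 0 (A2 j)))
          (Matrix.fromBlocks B1 0 0 B2) := by
  ext X
  simp only [Set.mem_setOf_eq, cmz]
  constructor
  · rintro ⟨X1, ⟨b1, hb1, hA1, rfl⟩, X2, ⟨b2, hb2, hA2, rfl⟩, rfl⟩
    refine ⟨Sum.elim b1 b2, ?_, ?_, ?_⟩
    · rintro (i|j) <;> simp [hb1, hb2]
    · rw [Fintype.sum_sum_type]
      simp only [Sum.elim_inl, Sum.elim_inr, Matrix.fromBlocks_smul, smul_zero]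
      rw [sum_fromBlocks, sum_fromBlocks, Matrix.fromBlocks_add, hA1, hA2]
      simp
    · rw [Fintype.sum_sum_type]
      simp only [Sum.elim_inl, Sum.elim_inr]
      abel
  · rintro ⟨b, hb, hA, rfl⟩
    rw [Fintype.sum_sum_type] at hA
    simp only [Sum.elim_inl, Sum.elim_inr, Matrix.fromBlocks_smul, smul_zero] at hA
    rw [sum_fromBlocks, sum_fromBlocks, Matrix.fromBlocks_add] at hA
    simp only [Finset.sum_const_zero, add_zero, zero_add, Matrix.fromBlocks_inj] at hA
    refine ⟨C1 + ∑ i, b (Sum.inl i) • G1 i, ⟨fun i => b (Sum.inl i), fun i => hb _, hA.1, rfl⟩,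
      C2 + ∑ j, b (Sum.inr j) • G2 j, ⟨fun j => b (Sum.inr j), fun j => hb _, hA.2.2.2, rfl⟩, ?_⟩
    rw [Fintype.sum_sum_type]
    simp only [Sum.elim_inl, Sum.elim_inr]
    abel
end

section
/- Let N = ⟨C_N, (G_N^{(i)})_{i=1}^{γN}, (A_N^{(i)})_{i=1}^{γN}, B_N⟩ be a constrained matrix zonotope of p×n matrices and Z = ⟨c_Z, G_Z⟩ a zonotope in ℝⁿ with γZ generators. For each i define f^{(i)} = max(|β_L^{(i)}|, |β_U^{(i)}|) where β_L^{(i)} (resp. β_U^{(i)}) is the minimum (resp. maximum) of β^{(i)} over all β with Σ_j β^{(j)} A_N^{(j)} = B_N and ‖β‖∞ ≤ 1 (assumed nonempty). Then the set N·Z = {X z : X ∈ N, z ∈ Z} is contained in the constrained zonotope with center C_N c_Z, generator matrix [G_N^{(1)} c_Z … G_N^{(γN)} c_Z, C_N G_Z, G_f] where G_f collects the columns f^{(i)} G_N^{(i)} g_Z^{(j)} for all i, j (g_Z^{(j)} being the columns of G_Z), constraint matrix [A_{NZ}, 0, 0] where the column i of A_{NZ} is vec(A_N^{(i)}), and constraint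 vector vec(B_N). -/
open Matrix

/-- A zonotope with center `c` and generator matrix `G`. -/
def zono {α ι : Type*} [Fintype ι] (c : α → ℝ) (G : Matrix α ι ℝ) : Set (α → ℝ) :=
  {x | ∃ β : ι → ℝ, (∀ i, |β i| ≤ 1) ∧ x = c + G.mulVec β}

/-- A constrained zonotope with center `c`, generator matrix `G`,
constraint matrix `A` and constraint vector `b`. -/
def czono {α κ ι : Type*} [Fintype ι] (c : α → ℝ) (G : Matrix α ι ℝ)
    (A : Matrix κ ι ℝ) (b : κ → ℝ) : Set (α → ℝ) :=
  {x | ∃ β : ι → ℝ, (∀ i, |β i| ≤ 1) ∧ A.mulVec β = b ∧ x = c + G.mulVec β}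

theorem cmz_mul_zono_subset {p n nc na γN γZ : ℕ}
    (CN : Matrix (Fin p) (Fin n) ℝ) (GN : Fin γN → Matrix (Fin p) (Fin n) ℝ)
    (AN : Fin γN → Matrix (Fin nc) (Fin na) ℝ) (BN : Matrix (Fin nc) (Fin na) ℝ)
    (cZ : Fin n → ℝ) (GZ : Matrix (Fin n) (Fin γZ) ℝ)
    (βL βU f : Fin γN → ℝ)
    (hβL : ∀ i, IsLeast {t | ∃ β : Fin γN → ℝ, (∀ j, |β j| ≤ 1) ∧
        (∑ j, β j • AN j) = BN ∧ t = β i} (βL i))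
    (hβU : ∀ i, IsGreatest {t | ∃ β : Fin γN → ℝ, (∀ j, |β j| ≤ 1) ∧
        (∑ j, β j • AN j) = BN ∧ t = β i} (βU i))
    (hf : ∀ i, f i = max |βL i| |βU i|) :
    {y | ∃ X ∈ cmz CN GN AN BN, ∃ z ∈ zono cZ GZ, y = X.mulVec z}
      ⊆ czono (CN.mulVec cZ)
          (Matrix.of fun r k =>
            Sum.elim (fun i => (GN i).mulVec cZ r)
              (Sum.elim (fun j => (CN * GZ) r j)
                (fun ij : Fin γN × Fin γZ => f ij.1 * (GN ij.1 * GZ) r ij.2)) k)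
          (Matrix.of fun (rs : Fin nc × Fin na) k =>
            Sum.elim (fun i => AN i rs.1 rs.2)
              (Sum.elim (fun _ : Fin γZ => (0:ℝ))
                (fun _ : Fin γN × Fin γZ => (0:ℝ))) k)
          (fun rs : Fin nc × Fin na => BN rs.1 rs.2) := by
  rintro y ⟨X, ⟨b, hb1, hbA, rfl⟩, z, ⟨β, hβ1, rfl⟩, rfl⟩
  have hbf : ∀ i, |b i| ≤ f i := by
    intro i
    have hmem : b i ∈ {t | ∃ β : Fin γN → ℝ, (∀ j, |β j| ≤ 1) ∧
        (∑ j, β j • AN j) = BN ∧ t = β i} := ⟨b, hb1, hbA, rfl⟩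
    have hL := (hβL i).2 hmem
    have hU := (hβU i).2 hmem
    rw [hf i]
    rcases le_total 0 (b i) with h | h
    · exact le_max_of_le_right ((hU.trans (le_abs_self _)).trans_eq'
        (abs_of_nonneg h).symm)
    · refine le_max_of_le_left ?_
      rw [abs_of_nonpos h]
      exact (neg_le_neg hL).trans (neg_le_abs _)
  have hf0 : ∀ i, 0 ≤ f i := fun i => (abs_nonneg _).trans (hbf i)
  set β' : (Fin γN ⊕ (Fin γZ ⊕ Fin γN × Fin γZ)) → ℝ :=
    Sum.elim b (Sum.elim β (fun ij => if f ij.1 = 0 then 0 else b ij.1 * β ij.2 / f ij.1))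
    with hβ'
  have key : ∀ i j, f i * (if f i = 0 then 0 else b i * β j / f i) = b i * β j := by
    intro i j
    by_cases h : f i = 0
    · have hb0 : b i = 0 := abs_eq_zero.mp (le_antisymm (h ▸ hbf i) (abs_nonneg _))
      simp [h, hb0]
    · rw [if_neg h, mul_comm, div_mul_cancel₀ _ h]
  refine ⟨β', ?_, ?_, ?_⟩
  · rintro (i | j | ij)
    · exact hb1 i
    · exact hβ1 j
    · simp only [hβ', Sum.elim_inr, Sum.elim_inl]
      by_cases h : f ij.1 = 0
      · simp [h]
      · have hfi : 0 < f ij.1 := (hf0 _).lt_of_ne (Ne.symm h)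
        rw [if_neg h, abs_div, abs_of_pos hfi, div_le_one hfi, abs_mul]
        calc |b ij.1| * |β ij.2| ≤ f ij.1 * 1 :=
              mul_le_mul (hbf _) (hβ1 _) (abs_nonneg _) (hf0 _)
          _ = f ij.1 := mul_one _
  · funext rs
    have h0 := congrFun (congrFun hbA rs.1) rs.2
    simp only [mulVec, dotProduct, Fintype.sum_sum_type, of_apply, Sum.elim_inl, Sum.elim_inr,
      zero_mul, Finset.sum_const_zero, add_zero, hβ']
    simpa [Matrix.sum_apply, Matrix.smul_apply, mul_comm] using h0
  · funext r
    have hrhs : Matrix.mulVec (Matrix.of fun r k =>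
        Sum.elim (fun i => (GN i).mulVec cZ r)
          (Sum.elim (fun j => (CN * GZ) r j)
            (fun ij : Fin γN × Fin γZ => f ij.1 * (GN ij.1 * GZ) r ij.2)) k) β' r
        = (∑ i, (GN i).mulVec cZ r * b i) + ((∑ j, (CN * GZ) r j * β j)
          + ∑ i, ∑ j, (GN i * GZ) r j * (b i * β j)) := by
      simp only [mulVec, dotProduct, Fintype.sum_sum_type, of_apply, Sum.elim_inl, Sum.elim_inr,
        hβ', Fintype.sum_prod_type]
      congr 1
      congr 1
      refine Finset.sum_congr rfl fun i _ => Finset.sum_congr rfl fun j _ => ?_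
      rw [mul_comm (f i), mul_assoc, key i j]
    have hsum : ∀ v : Fin n → ℝ, ((∑ i, b i • GN i).mulVec v) r = ∑ i, b i * (GN i).mulVec v r := by
      intro v
      simp only [mulVec, dotProduct, Matrix.sum_apply, Matrix.smul_apply, smul_eq_mul,
        Finset.sum_mul, Finset.mul_sum]
      rw [Finset.sum_comm]
      exact Finset.sum_congr rfl fun i _ => Finset.sum_congr rfl fun c _ => by ring
    have h1 : (∑ i, b i • GN i).mulVec cZ r = ∑ i, (GN i).mulVec cZ r * b i := by
      rw [hsum]
      exact Finset.sum_congr rfl fun i _ => mul_comm _ _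
    have h2 : (∑ i, b i • GN i).mulVec (GZ.mulVec β) r
        = ∑ i, ∑ j, (GN i * GZ) r j * (b i * β j) := by
      rw [hsum]
      refine Finset.sum_congr rfl fun i _ => ?_
      rw [Matrix.mulVec_mulVec]
      show b i * ∑ j, (GN i * GZ) r j * β j = _
      rw [Finset.mul_sum]
      exact Finset.sum_congr rfl fun j _ => by ring
    have h3 : CN.mulVec (GZ.mulVec β) r = ∑ j, (CN * GZ) r j * β j := by
      rw [Matrix.mulVec_mulVec]
      rfl
    rw [Pi.add_apply, hrhs, add_mulVec, mulVec_add, mulVec_add, Pi.add_apply, Pi.add_apply,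
      Pi.add_apply, h1, h2, h3]
    ring
end

section
/- Consider the LTI system x(k+1) = A_tr x(k) + B_tr u(k) + w(k) with state data matrices X_-, X_+ ∈ ℝ^{n×T}, input data matrix U_- ∈ ℝ^{m×T} satisfying X_+ = A_tr X_- + B_tr U_- + Ŵ_-, where the unknown noise matrix Ŵ_- belongs to a matrix zonotope M_w = ⟨C_w, (G_w^{(i)})_{i=1}^{γ}⟩. Suppose H ∈ ℝ^{T×(n+m)} satisfies [X_-; U_-] H = I_{n+m}. Then the matrix zonotope M_Σ = (X_+ − M_w) H, i.e., the matrix zonotope with center (X_+ − C_w)H and generators −G_w^{(i)} H, contains every matrix [A B] ∈ ℝ^{n×(n+m)} for which there exists W_- ∈ M_w with X_+ = A X_- + B U_- + W_-. In particular it contains [A_tr B_tr]. -/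
open Matrix

/-- A matrix zonotope with center `C` and generator matrices `G i`. -/
def mz {α β ι : Type*} [Fintype ι] (C : Matrix α β ℝ) (G : ι → Matrix α β ℝ) :
    Set (Matrix α β ℝ) :=
  {X | ∃ b : ι → ℝ, (∀ i, |b i| ≤ 1) ∧ X = C + ∑ i, b i • G i}

theorem mz_contains_consistent_models {n m T γ : ℕ}
    (Atr : Matrix (Fin n) (Fin n) ℝ) (Btr : Matrix (Fin n) (Fin m) ℝ)
    (Xm Xp : Matrix (Fin n) (Fin T) ℝ) (Um : Matrix (Fin m) (Fin T) ℝ)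
    (Cw : Matrix (Fin n) (Fin T) ℝ) (Gw : Fin γ → Matrix (Fin n) (Fin T) ℝ)
    (Wtr : Matrix (Fin n) (Fin T) ℝ)
    (hdata : Xp = Atr * Xm + Btr * Um + Wtr) (hWtr : Wtr ∈ mz Cw Gw)
    (H : Matrix (Fin T) (Fin n ⊕ Fin m) ℝ)
    (hH : Matrix.fromRows Xm Um * H = 1) :
    (∀ AB : Matrix (Fin n) (Fin n ⊕ Fin m) ℝ,
        (∃ W ∈ mz Cw Gw, Xp = AB * Matrix.fromRows Xm Um + W) →
        AB ∈ mz ((Xp - Cw) * H) (fun i => -(Gw i * H))) ∧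
      Matrix.fromCols Atr Btr ∈ mz ((Xp - Cw) * H) (fun i => -(Gw i * H)) := by

  have main : ∀ AB : Matrix (Fin n) (Fin n ⊕ Fin m) ℝ,
      (∃ W ∈ mz Cw Gw, Xp = AB * Matrix.fromRows Xm Um + W) →
      AB ∈ mz ((Xp - Cw) * H) (fun i => -(Gw i * H)) := by
    rintro AB ⟨W, ⟨b, hb, hW⟩, hXp⟩
    refine ⟨b, hb, ?_⟩
    have h1 : AB = (Xp - W) * H := by
      have : (Xp - W) * H = AB * (Matrix.fromRows Xm Um * H) := by
        rw [hXp, add_sub_cancel_right, Matrix.mul_assoc]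
      rw [this, hH, Matrix.mul_one]
    rw [h1, hW]
    have : Xp - (Cw + ∑ i, b i • Gw i) = (Xp - Cw) + ∑ i, b i • (-(Gw i)) := by
      simp only [smul_neg, Finset.sum_neg_distrib]; abel
    rw [this, Matrix.add_mul, Matrix.sum_mul]
    congr 1
    refine Finset.sum_congr rfl fun i _ => ?_
    rw [Matrix.smul_mul, Matrix.neg_mul, smul_neg]
  refine ⟨main, main _ ⟨Wtr, hWtr, ?_⟩⟩
  rw [hdata, Matrix.fromCols_mul_fromRows]
end

section
/- Consider the system x(k+1) = A_tr x(k) + B_tr u(k) + w(k), y(k) = x(k) + v(k), with data matrices Y_-, Y_+ (shifted noisy state data) and U_-. Let V_-, V_+ be the measurement-noise matrices so that Y_± = X_± + V_±, and let W_- be the process-noise matrix. Suppose Ô := V_+ − A_tr V_- belongs to a known matrix zonotope M_o, W_- ∈ M_w, and there exists H̃ with [Y_-; U_-] H̃ = I. Then [A_tr B_tr] ∈ M_Σ̃ := (Y_+ − M_o − M_w) H̃, and consequently the recursion R̂_0^m = X_0, R̂_{k+1}^m = M_Σ̃ (R̂_k^m × U_k) + Z_w, produces sets satisfying R_k ⊆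 R̂_k^m for all k, where R_k is the exact reachable set of the system. -/
open Matrix

theorem meas_noise_reachability {n m T : ℕ}
    (Atr : Matrix (Fin n) (Fin n) ℝ) (Btr : Matrix (Fin n) (Fin m) ℝ)
    (Xm Xp Vm Vp Wm : Matrix (Fin n) (Fin T) ℝ)
    (Ym Yp : Matrix (Fin n) (Fin T) ℝ) (Um : Matrix (Fin m) (Fin T) ℝ)
    (hX : Xp = Atr * Xm + Btr * Um + Wm)
    (hYm : Ym = Xm + Vm) (hYp : Yp = Xp + Vp)
    (Mo Mw : Set (Matrix (Fin n) (Fin T) ℝ))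
    (hO : Vp - Atr * Vm ∈ Mo) (hW : Wm ∈ Mw)
    (Htil : Matrix (Fin T) (Fin n ⊕ Fin m) ℝ)
    (hH : Matrix.fromRows Ym Um * Htil = 1)
    (Msig : Set (Matrix (Fin n) (Fin n ⊕ Fin m) ℝ))
    (hMsig : Msig = {M | ∃ O ∈ Mo, ∃ W ∈ Mw, M = (Yp - O - W) * Htil})
    (X0 Zw : Set (Fin n → ℝ)) (U : ℕ → Set (Fin m → ℝ))
    (Rhat : ℕ → Set (Fin n → ℝ))
    (hR0 : Rhat 0 = X0)
    (hRk : ∀ k, Rhat (k + 1) =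
      {y | ∃ M ∈ Msig, ∃ x ∈ Rhat k, ∃ u ∈ U k, ∃ w ∈ Zw,
        y = M.mulVec (Sum.elim x u) + w}) :
    Matrix.fromCols Atr Btr ∈ Msig ∧
    ∀ (k : ℕ) (x : ℕ → Fin n → ℝ) (u : ℕ → Fin m → ℝ) (w : ℕ → Fin n → ℝ),
      x 0 ∈ X0 →
      (∀ j < k, u j ∈ U j) →
      (∀ j < k, w j ∈ Zw) →
      (∀ j < k, x (j + 1) = Atr.mulVec (x j) + Btr.mulVec (u j) + w j) →
      x k ∈ Rhat k := by
  have hmem : Matrix.fromCols Atr Btr ∈ Msig := by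
    rw [hMsig]
    refine ⟨Vp - Atr * Vm, hO, Wm, hW, ?_⟩
    have key : Yp - (Vp - Atr * Vm) - Wm = Matrix.fromCols Atr Btr * Matrix.fromRows Ym Um := by
      rw [fromCols_mul_fromRows, hYp, hX, hYm]
      rw [Matrix.mul_add]; abel
    rw [key, Matrix.mul_assoc, hH, Matrix.mul_one]
  refine ⟨hmem, ?_⟩
  intro k x u w hx0 hu hw hdyn
  induction k with
  | zero => rw [hR0]; exact hx0
  | succ k ih =>
    rw [hRk]
    refine ⟨Matrix.fromCols Atr Btr, hmem, x k,
      ih (fun j hj => hu j (hj.trans (Nat.lt_succ_self k)))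
         (fun j hj => hw j (hj.trans (Nat.lt_succ_self k)))
         (fun j hj => hdyn j (hj.trans (Nat.lt_succ_self k))),
      u k, hu k (Nat.lt_succ_self k), w k, hw k (Nat.lt_succ_self k), ?_⟩
    rw [hdyn k (Nat.lt_succ_self k), fromCols_mulVec_sumElim]
end

section
/- Consider a polynomial system x(k+1) = C_tr g(z(k)) + w(k) where z(k) stacks x(k) and u(k) and g maps ℝ^{n+m} to ℝ^{m_c}. Let Ĝ = [g(z_0) … g(z_{T−1})] ∈ ℝ^{m_c×T} be the data matrix of evaluated monomials and X_+ the successor-state data, so that X_+ = C_tr Ĝ + Ŵ_- with the unknown Ŵ_- ∈ M_w (a matrix zonotope). If H^p satisfies Ĝ H^p = I_{m_c}, then the matrix zonotope M_Σ^p = (X_+ − M_w) H^p contains every matrix C for which there exists W_- ∈ M_w with X_+ = C Ĝ + W_-; in particular C_tr ∈ M_Σ^p. -/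
open Matrix

theorem poly_mz_contains_consistent_models {n mc T γ : ℕ}
    (Ctr : Matrix (Fin n) (Fin mc) ℝ)
    (Ghat : Matrix (Fin mc) (Fin T) ℝ) (Xp : Matrix (Fin n) (Fin T) ℝ)
    (Cw : Matrix (Fin n) (Fin T) ℝ) (Gw : Fin γ → Matrix (Fin n) (Fin T) ℝ)
    (Wtr : Matrix (Fin n) (Fin T) ℝ)
    (hdata : Xp = Ctr * Ghat + Wtr) (hWtr : Wtr ∈ mz Cw Gw)
    (Hp : Matrix (Fin T) (Fin mc) ℝ) (hHp : Ghat * Hp = 1) :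
    (∀ C : Matrix (Fin n) (Fin mc) ℝ,
        (∃ W ∈ mz Cw Gw, Xp = C * Ghat + W) →
        C ∈ mz ((Xp - Cw) * Hp) (fun i => -(Gw i * Hp))) ∧
      Ctr ∈ mz ((Xp - Cw) * Hp) (fun i => -(Gw i * Hp)) := by
  have main : ∀ C : Matrix (Fin n) (Fin mc) ℝ,
      (∃ W ∈ mz Cw Gw, Xp = C * Ghat + W) →
      C ∈ mz ((Xp - Cw) * Hp) (fun i => -(Gw i * Hp)) := by
    intro C ⟨W, ⟨b, hb, hW⟩, hXp⟩
    refine ⟨b, hb, ?_⟩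
    have hC : C = (Xp - W) * Hp := by
      have : Xp - W = C * Ghat := by rw [hXp]; abel
      rw [this, Matrix.mul_assoc, hHp, Matrix.mul_one]
    rw [hC, hW]
    have : Xp - (Cw + ∑ i, b i • Gw i) = (Xp - Cw) + ∑ i, b i • (-(Gw i)) := by
      rw [sub_add_eq_sub_sub, sub_eq_add_neg, ← Finset.sum_neg_distrib]
      simp [smul_neg]
    rw [this, Matrix.add_mul, Matrix.sum_mul]
    congr 1
    refine Finset.sum_congr rfl fun i _ => ?_
    simp [Matrix.smul_mul, Matrix.neg_mul, smul_neg]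
  exact ⟨main, main Ctr ⟨Wtr, hWtr, hdata⟩⟩
end
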